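/- Let V be a finite-dimensional real inner product space with a commutative bilinear multiplication ·, and suppose (e₁, …, e_N) and (f₁, …, f_N) are two orthonormal bases of V satisfying e_a · e_b = δ_{ab} κ_a e_a and f_a · f_b = δ_{ab} κ'_a f_a, where all κ_a > 0 and all κ'_a > 0. Then there exists a permutation σ of {1, …, N} such that f_a = e_{σ(a)} and κ'_a = κ_{σ(a)} for every a. -/

import Mathlib

/-- If two orthonormal bases of a finite-dimensional real inner
product space both diagonalize a commutative bilinear multiplication, with all
self-coupling constants strictly positive (`e_a·e_b = δ_{ab} κ_a e_a` and
`f_a·f_b = δ_{ab} κ'_a f_a`), then the two bases coincide up to a permutation, which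
also matches the coupling constants. -/
theorem diagonalizing_basis_unique_up_to_permutation
    {V : Type*} [NormedAddCommGroup V] [InnerProductSpace ℝ V]
    [FiniteDimensional ℝ V] {N : ℕ}
    (mul : V →ₗ[ℝ] V →ₗ[ℝ] V)
    (hcomm : ∀ x y : V, mul x y = mul y x)
    (e f : OrthonormalBasis (Fin N) ℝ V)
    (κ κ' : Fin N → ℝ)
    (hκ : ∀ a, 0 < κ a) (hκ' : ∀ a, 0 < κ' a)
    (he : ∀ a b, mul (e a) (e b) = if a = b then κ a • e a else 0)
    (hf : ∀ a b, mul (f a) (f b) = if a = b then κ' a • f a else 0) :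
    ∃ σ : Equiv.Perm (Fin N), ∀ a, f a = e (σ a) ∧ κ' a = κ (σ a) := by
  classical
  set c : Fin N → Fin N → ℝ := fun a i => inner ℝ (e i) (f a) with hc
  have hrepr : ∀ a, ∑ i, c a i • e i = f a := by
    intro a
    have h := e.sum_repr (f a)
    simp only [e.repr_apply_apply] at h
    exact h
  have hee : ∀ i j : Fin N, (inner ℝ (e i) (e j) : ℝ) = if i = j then 1 else 0 :=
    fun i j => orthonormal_iff_ite.mp e.orthonormal i j
  -- key coefficient identity
  have expand : ∀ u v : Fin N → ℝ,
      mul (∑ j, u j • e j) (∑ k, v k • e k)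
        = ∑ j, ∑ k, (u j * v k) • mul (e j) (e k) := by
    intro u v
    have h1 : ∀ y : V, mul (∑ j, u j • e j) y = ∑ j, u j • mul (e j) y := by
      intro y
      induction (Finset.univ : Finset (Fin N)) using Finset.induction with
      | empty => simp
      | insert _ _ hx ih =>
        rw [Finset.sum_insert hx, Finset.sum_insert hx, map_add, LinearMap.add_apply, ih,
          LinearMap.map_smul₂]
    rw [h1]
    refine Finset.sum_congr rfl fun j _ => ?_
    rw [map_sum, Finset.smul_sum]
    refine Finset.sum_congr rfl fun k _ => ?_
    rw [map_smul, smul_smul]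
  have key : ∀ a b i, c a i * c b i * κ i = if a = b then κ' a * c a i else 0 := by
    intro a b i
    have hval : ∀ j k, (inner ℝ (e i) (mul (e j) (e k)) : ℝ)
        = if j = i ∧ k = i then κ i else 0 := by
      intro j k
      rw [he]
      by_cases hjk : j = k
      · subst hjk
        rw [if_pos rfl, inner_smul_right, hee]
        by_cases hji : j = i
        · subst hji; simp
        · simp [hji, Ne.symm hji]
      · rw [if_neg hjk, inner_zero_right]
        have hcond : ¬(j = i ∧ k = i) := fun ⟨h1, h2⟩ => hjk (h1.trans h2.symm)
        simp [hcond]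
    have h1 : (inner ℝ (e i) (mul (f a) (f b)) : ℝ) = c a i * c b i * κ i := by
      conv_lhs => rw [← hrepr a, ← hrepr b]
      rw [expand, inner_sum]
      have hterm : ∀ j, (inner ℝ (e i) (∑ k, (c a j * c b k) • mul (e j) (e k)) : ℝ)
          = if j = i then c a i * c b i * κ i else 0 := by
        intro j
        rw [inner_sum]
        have : ∀ k, (inner ℝ (e i) ((c a j * c b k) • mul (e j) (e k)) : ℝ)
            = if j = i ∧ k = i then c a j * c b k * κ i else 0 := by
          intro k
          rw [inner_smul_right, hval]
          by_cases h : j = i ∧ k = i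
          · simp [h]
          · simp [h]
        rw [Finset.sum_congr rfl fun k _ => this k]
        by_cases hji : j = i
        · subst hji
          rw [Finset.sum_eq_single j]
          · simp
          · intro k _ hk; simp [hk]
          · intro h; exact absurd (Finset.mem_univ _) h
        · simp [hji]
      rw [Finset.sum_congr rfl fun j _ => hterm j]
      rw [Finset.sum_eq_single i]
      · simp
      · intro j _ hj; simp [hj]
      · intro h; exact absurd (Finset.mem_univ _) h
    have h2 : (inner ℝ (e i) (mul (f a) (f b)) : ℝ) = if a = b then κ' a * c a i else 0 := by
      rw [hf]
      by_cases hab : a = b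
      · subst hab
        simp only [if_pos rfl, if_true, inner_smul_right]
        rfl
      · simp [hab]
    rw [← h1, h2]
  have fact1 : ∀ a i, c a i = 0 ∨ c a i * κ i = κ' a := by
    intro a i
    have h := key a a i
    simp only [if_pos rfl, if_true] at h
    by_cases h0 : c a i = 0
    · exact Or.inl h0
    · right
      exact mul_left_cancel₀ h0 (by linear_combination h)
  have fact3 : ∀ a b i, a ≠ b → c a i = 0 ∨ c b i = 0 := by
    intro a b i hab
    have h := key a b i
    rw [if_neg hab] at h
    rcases mul_eq_zero.mp h with h' | h'
    · rcases mul_eq_zero.mp h' with h'' | h''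
      · exact Or.inl h''
      · exact Or.inr h''
    · exact absurd h' (hκ i).ne'
  have hex : ∀ a, ∃ i, c a i ≠ 0 := by
    intro a
    by_contra h
    push_neg at h
    have : f a = 0 := by
      rw [← hrepr a]
      simp [h]
    have := f.orthonormal.ne_zero a
    exact this ‹f a = 0›
  choose g hg using hex
  have ginj : Function.Injective g := by
    intro a b hab
    by_contra hne
    rcases fact3 a b (g a) hne with h | h
    · exact hg a h
    · rw [hab] at h; exact hg b h
  have gbij : Function.Bijective g := Finite.injective_iff_bijective.mp ginj
  have hsupp : ∀ a i, i ≠ g a → c a i = 0 := by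
    intro a i hi
    obtain ⟨b, rfl⟩ := gbij.surjective i
    have hab : a ≠ b := by rintro rfl; exact hi rfl
    rcases fact3 a b (g b) hab with h | h
    · exact h
    · exact absurd h (hg b)
  have hfa : ∀ a, f a = c a (g a) • e (g a) := by
    intro a
    rw [← hrepr a]
    rw [Finset.sum_eq_single (g a)]
    · intro j _ hj
      rw [hsupp a j hj, zero_smul]
    · intro h; exact absurd (Finset.mem_univ _) h
  have hcpos : ∀ a, 0 < c a (g a) := by
    intro a
    rcases fact1 a (g a) with h | h
    · exact absurd h (hg a)
    · nlinarith [hκ (g a), hκ' a]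
  have hcone : ∀ a, c a (g a) = 1 := by
    intro a
    have hn : ‖f a‖ = 1 := f.orthonormal.1 a
    rw [hfa a, norm_smul, e.orthonormal.1 (g a), mul_one] at hn
    rw [Real.norm_eq_abs, abs_of_pos (hcpos a)] at hn
    exact hn
  refine ⟨Equiv.ofBijective g gbij, fun a => ⟨?_, ?_⟩⟩
  · rw [hfa a, hcone a, one_smul]; rfl
  · rcases fact1 a (g a) with h | h
    · exact absurd h (hg a)
    · rw [← h, hcone a, one_mul]; rfl
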